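/- Let l > 0 and M with -l/(3√3) ≤ M ≤ 0, and let r_+ be the largest positive root of p(r) = r^3 - l^2 r - 2M l^2. Then -3M ≤ r_+. (Hence there are no constant-r null geodesics in the black hole exterior, since such geodesics would require r = -3M > r_+.) -/
import Mathlib


/-- For `-l/(3√3) ≤ M ≤ 0`, the largest positive root `r_+` of
`p(r) = r^3 - l^2 r - 2 M l^2` satisfies `-3M ≤ r_+`. -/
theorem no_constant_r_null_geodesics (l M rp : ℝ) (hl : 0 < l)
    (hMlow : -l / (3 * Real.sqrt 3) ≤ M) (hMhigh : M ≤ 0)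
    (hrp : 0 < rp) (hroot : rp ^ 3 - l ^ 2 * rp - 2 * M * l ^ 2 = 0)
    (hlargest : ∀ r : ℝ, 0 < r → r ^ 3 - l ^ 2 * r - 2 * M * l ^ 2 = 0 → r ≤ rp) :
    -3 * M ≤ rp := by
  by_contra hcon
  push_neg at hcon
  set a : ℝ := -3 * M with ha
  have ha0 : 0 < a := lt_trans hrp hcon
  have hs3 : (0:ℝ) < Real.sqrt 3 := Real.sqrt_pos.mpr (by norm_num)
  have hs3sq : Real.sqrt 3 ^ 2 = 3 := Real.sq_sqrt (by norm_num)
  have hM' : -l ≤ M * (3 * Real.sqrt 3) := by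
    rw [div_le_iff₀ (by positivity)] at hMlow
    linarith
  have hasq : a ^ 2 * 3 ≤ l ^ 2 := by
    have h1 : (0:ℝ) ≤ l + M * (3 * Real.sqrt 3) := by linarith
    have h2 : (0:ℝ) ≤ l - M * (3 * Real.sqrt 3) := by nlinarith
    rw [ha]
    nlinarith [mul_nonneg h1 h2, hs3sq]
  have hpa : a ^ 3 - l ^ 2 * a - 2 * M * l ^ 2 ≤ 0 := by nlinarith
  have hqa : a ^ 2 + rp * a + rp ^ 2 - l ^ 2 ≤ 0 := by
    nlinarith [mul_pos (sub_pos.mpr hcon) hrp, sub_pos.mpr hcon]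
  have hD0 : (2 * a + rp) ^ 2 ≤ 4 * l ^ 2 - 3 * rp ^ 2 := by nlinarith
  set s : ℝ := Real.sqrt (4 * l ^ 2 - 3 * rp ^ 2) with hsdef
  have hs0 : 0 ≤ s := Real.sqrt_nonneg _
  have hssq : s ^ 2 = 4 * l ^ 2 - 3 * rp ^ 2 :=
    Real.sq_sqrt (by nlinarith [sq_nonneg (2 * a + rp)])
  have hsge : 2 * a + rp ≤ s := by nlinarith [sq_nonneg (s - (2 * a + rp))]
  set r2 : ℝ := (s - rp) / 2 with hr2
  have hr2a : a ≤ r2 := by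
    rw [hr2]; linarith
  have hr2pos : 0 < r2 := lt_of_lt_of_le ha0 hr2a
  have hq2 : r2 ^ 2 + rp * r2 + rp ^ 2 - l ^ 2 = 0 := by
    rw [hr2]; linear_combination hssq / 4
  have hroot2 : r2 ^ 3 - l ^ 2 * r2 - 2 * M * l ^ 2 = 0 := by
    linear_combination (r2 - rp) * hq2 + hroot
  have hle := hlargest r2 hr2pos hroot2
  linarith
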